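/- The function S(β) = (1/2 + 1/N) · F₂(β)/F₀(β) - log β is strictly decreasing on (0,1), where F₀(β) = ∫_{ℝ^N} (β e^{-|v|²/2})/(1 - β e^{-|v|²/2}) dv and F₂(β) = ∫_{ℝ^N} |v|² (β e^{-|v|²/2})/(1 - β e^{-|v|²/2}) dv; in particular S is injective on (0,1). -/

import Mathlib

open MeasureTheory Real

noncomputable def gg (N : ℕ) (β : ℝ) (v : EuclideanSpace ℝ (Fin N)) : ℝ :=
  β * Real.exp (-‖v‖ ^ 2 / 2) / (1 - β * Real.exp (-‖v‖ ^ 2 / 2))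

noncomputable def ff (N : ℕ) (β : ℝ) (v : EuclideanSpace ℝ (Fin N)) : ℝ :=
  ‖v‖ ^ 2 * (β * Real.exp (-‖v‖ ^ 2 / 2)) / (1 - β * Real.exp (-‖v‖ ^ 2 / 2))

lemma gauss_int (N : ℕ) {c : ℝ} (hc : 0 < c) :
    Integrable (fun v : EuclideanSpace ℝ (Fin N) ↦ Real.exp (-‖v‖ ^ 2 / c)) := by
  have h := (GaussianFourier.integrable_cexp_neg_mul_sq_norm_add
      (V := EuclideanSpace ℝ (Fin N)) (b := ((1 : ℂ) / c))
      (by simp [Complex.div_re]; positivity) 0 0).norm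
  convert h using 2 with v
  simp [Complex.norm_exp]
  rw [show (((‖v‖ : ℂ)) ^ 2).re = ‖v‖ ^ 2 by norm_cast]
  ring

lemma den_pos {β : ℝ} (h0 : 0 < β) (h1 : β < 1) (x : ℝ) (hx : 0 ≤ x) :
    0 < 1 - β * Real.exp (-x / 2) := by
  have h2 : Real.exp (-x / 2) ≤ 1 := Real.exp_le_one_iff.mpr (by linarith)
  nlinarith [Real.exp_pos (-x / 2)]

lemma int_g (N : ℕ) {β : ℝ} (h0 : 0 < β) (h1 : β < 1) :
    Integrable (gg N β) := by
  unfold gg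
  have hden : ∀ v : EuclideanSpace ℝ (Fin N), 0 < 1 - β * Real.exp (-‖v‖ ^ 2 / 2) :=
    fun v ↦ den_pos h0 h1 _ (by positivity)
  apply Integrable.mono' (((gauss_int N (by norm_num : (0:ℝ) < 2)).const_mul (β / (1 - β))))
  · exact (Continuous.div (by fun_prop) (by fun_prop) (fun v ↦ (hden v).ne')).aestronglyMeasurable
  · refine Filter.Eventually.of_forall fun v ↦ ?_
    have hnn : (0:ℝ) ≤ ‖v‖ ^ 2 := by positivity
    have hE : Real.exp (-‖v‖ ^ 2 / 2) ≤ 1 := Real.exp_le_one_iff.mpr (by linarith)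
    have hEp : 0 < Real.exp (-‖v‖ ^ 2 / 2) := Real.exp_pos _
    rw [Real.norm_eq_abs, abs_of_nonneg (div_nonneg (by positivity) (hden v).le)]
    calc β * Real.exp (-‖v‖ ^ 2 / 2) / (1 - β * Real.exp (-‖v‖ ^ 2 / 2))
        ≤ β * Real.exp (-‖v‖ ^ 2 / 2) / (1 - β) := by
          rw [div_le_div_iff₀ (hden v) (by linarith)]
          have h2 : 1 - β ≤ 1 - β * Real.exp (-‖v‖ ^ 2 / 2) := by nlinarith
          nlinarith [mul_le_mul_of_nonneg_left h2
            (show (0:ℝ) ≤ β * Real.exp (-‖v‖ ^ 2 / 2) by positivity)]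
      _ = β / (1 - β) * Real.exp (-‖v‖ ^ 2 / 2) := by ring

lemma int_f2 (N : ℕ) {β : ℝ} (h0 : 0 < β) (h1 : β < 1) :
    Integrable (ff N β) := by
  unfold ff
  have hden : ∀ v : EuclideanSpace ℝ (Fin N), 0 < 1 - β * Real.exp (-‖v‖ ^ 2 / 2) :=
    fun v ↦ den_pos h0 h1 _ (by positivity)
  apply Integrable.mono' (((gauss_int N (by norm_num : (0:ℝ) < 4)).const_mul (4 * β / (1 - β))))
  · exact (Continuous.div (by fun_prop) (by fun_prop) (fun v ↦ (hden v).ne')).aestronglyMeasurable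
  · refine Filter.Eventually.of_forall fun v ↦ ?_
    have hnn : (0:ℝ) ≤ ‖v‖ ^ 2 := by positivity
    have hEp : 0 < Real.exp (-‖v‖ ^ 2 / 2) := Real.exp_pos _
    rw [Real.norm_eq_abs, abs_of_nonneg (div_nonneg (by positivity) (hden v).le)]
    have key : ‖v‖ ^ 2 * Real.exp (-‖v‖ ^ 2 / 2) ≤ 4 * Real.exp (-‖v‖ ^ 2 / 4) := by
      have h4 : ‖v‖ ^ 2 / 4 + 1 ≤ Real.exp (‖v‖ ^ 2 / 4) := Real.add_one_le_exp _
      have : ‖v‖ ^ 2 ≤ 4 * Real.exp (‖v‖ ^ 2 / 4) := by nlinarith [Real.exp_pos (‖v‖ ^ 2 / 4)]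
      have hmul : ‖v‖ ^ 2 * Real.exp (-‖v‖ ^ 2 / 2)
          ≤ 4 * Real.exp (‖v‖ ^ 2 / 4) * Real.exp (-‖v‖ ^ 2 / 2) :=
        mul_le_mul_of_nonneg_right this hEp.le
      calc ‖v‖ ^ 2 * Real.exp (-‖v‖ ^ 2 / 2)
          ≤ 4 * Real.exp (‖v‖ ^ 2 / 4) * Real.exp (-‖v‖ ^ 2 / 2) := hmul
        _ = 4 * Real.exp (-‖v‖ ^ 2 / 4) := by
            rw [mul_assoc, ← Real.exp_add]; ring_nf
    calc ‖v‖ ^ 2 * (β * Real.exp (-‖v‖ ^ 2 / 2)) / (1 - β * Real.exp (-‖v‖ ^ 2 / 2))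
        ≤ ‖v‖ ^ 2 * (β * Real.exp (-‖v‖ ^ 2 / 2)) / (1 - β) := by
          have hE : Real.exp (-‖v‖ ^ 2 / 2) ≤ 1 := Real.exp_le_one_iff.mpr (by linarith)
          have h2 : 1 - β ≤ 1 - β * Real.exp (-‖v‖ ^ 2 / 2) := by nlinarith
          rw [div_le_div_iff₀ (hden v) (by linarith)]
          nlinarith [mul_le_mul_of_nonneg_left h2
            (show (0:ℝ) ≤ ‖v‖ ^ 2 * (β * Real.exp (-‖v‖ ^ 2 / 2)) by positivity)]
      _ = (β / (1 - β)) * (‖v‖ ^ 2 * Real.exp (-‖v‖ ^ 2 / 2)) := by ring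
      _ ≤ (β / (1 - β)) * (4 * Real.exp (-‖v‖ ^ 2 / 4)) :=
          mul_le_mul_of_nonneg_left key (div_nonneg h0.le (by linarith))
      _ = 4 * β / (1 - β) * Real.exp (-‖v‖ ^ 2 / 4) := by ring

lemma gg_pos (N : ℕ) {β : ℝ} (h0 : 0 < β) (h1 : β < 1) (v : EuclideanSpace ℝ (Fin N)) :
    0 < gg N β v :=
  div_pos (by positivity) (den_pos h0 h1 _ (by positivity))

lemma F0_pos (N : ℕ) {β : ℝ} (h0 : 0 < β) (h1 : β < 1) :
    0 < ∫ v, gg N β v := by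
  rw [integral_pos_iff_support_of_nonneg (fun v ↦ (gg_pos N h0 h1 v).le) (int_g N h0 h1)]
  have hsupp : Function.support (gg N β) = Set.univ :=
    Set.eq_univ_of_forall fun v ↦ (gg_pos N h0 h1 v).ne'
  rw [hsupp]
  exact IsOpen.measure_pos volume isOpen_univ ⟨0, trivial⟩

lemma ptwise {a b x y p q : ℝ} (ha : 0 < a) (hab : a ≤ b)
    (hx : 0 < x) (hy : 0 < y)
    (hax : 0 < 1 - a * x) (hbx : 0 < 1 - b * x)
    (hay : 0 < 1 - a * y) (hby : 0 < 1 - b * y)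
    (hpq : (p - q) * (x - y) ≤ 0) :
    p * (b * x) / (1 - b * x) * (a * y / (1 - a * y))
      + a * x / (1 - a * x) * (q * (b * y) / (1 - b * y))
      - p * (a * x) / (1 - a * x) * (b * y / (1 - b * y))
      - b * x / (1 - b * x) * (q * (a * y) / (1 - a * y)) ≤ 0 := by
  have key : p * (b * x) / (1 - b * x) * (a * y / (1 - a * y))
      + a * x / (1 - a * x) * (q * (b * y) / (1 - b * y))
      - p * (a * x) / (1 - a * x) * (b * y / (1 - b * y))
      - b * x / (1 - b * x) * (q * (a * y) / (1 - a * y))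
      = ((p - q) * (x - y) * ((b - a) * (a * b * x * y)))
        / ((1 - a * x) * (1 - b * x) * ((1 - a * y) * (1 - b * y))) := by
    have := hax.ne'; have := hbx.ne'; have := hay.ne'; have := hby.ne'
    have : 1 - x*a ≠ 0 := by rw [mul_comm]; exact hax.ne'
    have : 1 - x*b ≠ 0 := by rw [mul_comm]; exact hbx.ne'
    have : 1 - y*a ≠ 0 := by rw [mul_comm]; exact hay.ne'
    have : 1 - y*b ≠ 0 := by rw [mul_comm]; exact hby.ne'
    field_simp
    ring
  have hb : 0 < b := lt_of_lt_of_le ha hab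
  rw [key]
  apply div_nonpos_of_nonpos_of_nonneg
  · exact mul_nonpos_of_nonpos_of_nonneg hpq
      (mul_nonneg (by linarith) (by positivity))
  · have := mul_pos (mul_pos hax hbx) (mul_pos hay hby)
    linarith

lemma key_ineq (N : ℕ) {a b : ℝ} (ha : a ∈ Set.Ioo (0:ℝ) 1) (hb : b ∈ Set.Ioo (0:ℝ) 1)
    (hab : a ≤ b) :
    (∫ v, ff N b v) * (∫ v, gg N a v) ≤ (∫ v, ff N a v) * (∫ v, gg N b v) := by
  obtain ⟨ha0, ha1⟩ := ha
  obtain ⟨hb0, hb1⟩ := hb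
  have i0a := int_g N ha0 ha1
  have i0b := int_g N hb0 hb1
  have i2a := int_f2 N ha0 ha1
  have i2b := int_f2 N hb0 hb1
  let P : Measure (EuclideanSpace ℝ (Fin N) × EuclideanSpace ℝ (Fin N)) :=
    (volume : Measure (EuclideanSpace ℝ (Fin N))).prod volume
  have h1 : ∫ p : EuclideanSpace ℝ (Fin N) × EuclideanSpace ℝ (Fin N), ff N b p.1 * gg N a p.2 ∂P = (∫ v, ff N b v) * ∫ v, gg N a v :=
    integral_prod_mul _ _
  have h2 : ∫ p : EuclideanSpace ℝ (Fin N) × EuclideanSpace ℝ (Fin N), gg N a p.1 * ff N b p.2 ∂P = (∫ v, gg N a v) * ∫ v, ff N b v :=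
    integral_prod_mul _ _
  have h3 : ∫ p : EuclideanSpace ℝ (Fin N) × EuclideanSpace ℝ (Fin N), ff N a p.1 * gg N b p.2 ∂P = (∫ v, ff N a v) * ∫ v, gg N b v :=
    integral_prod_mul _ _
  have h4 : ∫ p : EuclideanSpace ℝ (Fin N) × EuclideanSpace ℝ (Fin N), gg N b p.1 * ff N a p.2 ∂P = (∫ v, gg N b v) * ∫ v, ff N a v :=
    integral_prod_mul _ _
  have j1 : Integrable (fun p ↦ ff N b p.1 * gg N a p.2) P := i2b.mul_prod i0a
  have j2 : Integrable (fun p ↦ gg N a p.1 * ff N b p.2) P := i0a.mul_prod i2b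
  have j3 : Integrable (fun p ↦ ff N a p.1 * gg N b p.2) P := i2a.mul_prod i0b
  have j4 : Integrable (fun p ↦ gg N b p.1 * ff N a p.2) P := i0b.mul_prod i2a
  have htot : ∫ p : EuclideanSpace ℝ (Fin N) × EuclideanSpace ℝ (Fin N), (ff N b p.1 * gg N a p.2 + gg N a p.1 * ff N b p.2
      - ff N a p.1 * gg N b p.2 - gg N b p.1 * ff N a p.2) ∂P
      = (∫ v, ff N b v) * (∫ v, gg N a v) + (∫ v, gg N a v) * (∫ v, ff N b v)
        - (∫ v, ff N a v) * (∫ v, gg N b v) - (∫ v, gg N b v) * (∫ v, ff N a v) := by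
    have j12 : Integrable (fun p : EuclideanSpace ℝ (Fin N) × EuclideanSpace ℝ (Fin N) ↦
        ff N b p.1 * gg N a p.2 + gg N a p.1 * ff N b p.2) P := j1.add j2
    have j123 : Integrable (fun p : EuclideanSpace ℝ (Fin N) × EuclideanSpace ℝ (Fin N) ↦
        ff N b p.1 * gg N a p.2 + gg N a p.1 * ff N b p.2 - ff N a p.1 * gg N b p.2) P :=
      j12.sub j3
    rw [integral_sub j123 j4, integral_sub j12 j3, integral_add j1 j2, h1, h2, h3, h4]
  have hneg : ∫ p : EuclideanSpace ℝ (Fin N) × EuclideanSpace ℝ (Fin N), (ff N b p.1 * gg N a p.2 + gg N a p.1 * ff N b p.2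
      - ff N a p.1 * gg N b p.2 - gg N b p.1 * ff N a p.2) ∂P ≤ 0 := by
    apply integral_nonpos
    intro p
    have hpq : (‖p.1‖ ^ 2 - ‖p.2‖ ^ 2) *
        (Real.exp (-‖p.1‖ ^ 2 / 2) - Real.exp (-‖p.2‖ ^ 2 / 2)) ≤ 0 := by
      rcases le_total (‖p.1‖ ^ 2) (‖p.2‖ ^ 2) with h | h
      · apply mul_nonpos_of_nonpos_of_nonneg (by linarith)
        have := Real.exp_le_exp.mpr (show -‖p.2‖ ^ 2 / 2 ≤ -‖p.1‖ ^ 2 / 2 by linarith)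
        linarith
      · apply mul_nonpos_of_nonneg_of_nonpos (by linarith)
        have := Real.exp_le_exp.mpr (show -‖p.1‖ ^ 2 / 2 ≤ -‖p.2‖ ^ 2 / 2 by linarith)
        linarith
    simp only [gg, ff]
    exact ptwise ha0 hab (Real.exp_pos _) (Real.exp_pos _)
      (den_pos ha0 ha1 _ (by positivity)) (den_pos hb0 hb1 _ (by positivity))
      (den_pos ha0 ha1 _ (by positivity)) (den_pos hb0 hb1 _ (by positivity)) hpq
  nlinarith [htot, hneg, mul_comm (∫ v, gg N a v) (∫ v, ff N b v),
    mul_comm (∫ v, gg N b v) (∫ v, ff N a v)]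

theorem stmt_4 (N : ℕ) (hN : 1 ≤ N)
    (F₀ F₂ S : ℝ → ℝ)
    (hF₀ : ∀ β, F₀ β = ∫ v : EuclideanSpace ℝ (Fin N),
        β * Real.exp (-‖v‖ ^ 2 / 2) / (1 - β * Real.exp (-‖v‖ ^ 2 / 2)))
    (hF₂ : ∀ β, F₂ β = ∫ v : EuclideanSpace ℝ (Fin N),
        ‖v‖ ^ 2 * (β * Real.exp (-‖v‖ ^ 2 / 2)) / (1 - β * Real.exp (-‖v‖ ^ 2 / 2)))
    (hS : ∀ β, S β = (1 / 2 + 1 / (N : ℝ)) * (F₂ β / F₀ β) - Real.log β) :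
    StrictAntiOn S (Set.Ioo (0 : ℝ) 1) ∧ Set.InjOn S (Set.Ioo (0 : ℝ) 1) := by
  have hF0' : ∀ β, F₀ β = ∫ v, gg N β v := fun β ↦ hF₀ β
  have hF2' : ∀ β, F₂ β = ∫ v, ff N β v := fun β ↦ hF₂ β
  have hanti : StrictAntiOn S (Set.Ioo (0 : ℝ) 1) := by
    intro a ha b hb hlt
    rw [hS a, hS b]
    have hc : 0 < 1 / 2 + 1 / (N : ℝ) := by
      have : (1:ℝ) ≤ (N:ℝ) := by exact_mod_cast hN
      positivity
    have hF0a : 0 < F₀ a := by rw [hF0']; exact F0_pos N ha.1 ha.2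
    have hF0b : 0 < F₀ b := by rw [hF0']; exact F0_pos N hb.1 hb.2
    have hR : F₂ b / F₀ b ≤ F₂ a / F₀ a := by
      rw [div_le_div_iff₀ hF0b hF0a, hF2' a, hF2' b, hF0' a, hF0' b]
      exact key_ineq N ha hb hlt.le
    have hlog : Real.log a < Real.log b := Real.log_lt_log ha.1 hlt
    have hm : (1 / 2 + 1 / (N : ℝ)) * (F₂ b / F₀ b) ≤ (1 / 2 + 1 / (N : ℝ)) * (F₂ a / F₀ a) :=
      mul_le_mul_of_nonneg_left hR hc.le
    linarith
  exact ⟨hanti, hanti.injOn⟩
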